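/- Let κ ∈ ℂ with 0 < |κ| < 1 and κ ∉ ℝ, and π(a) = Σ_{j≥0} a_j κ^j for a ∈ {−1,+1}^ℕ. Fix φ ∈ [0, 2π) such that Im(κ^j e^{iφ}) ≠ 0 for all j ≥ 0. Define a_j^{(φ)} = sign(Im(κ^j e^{iφ})) ∈ {−1,+1}. Then z = π((a_j^{(φ)})) is the unique maximizer of Im(w·e^{iφ}) over w ∈ A_κ, and (a_j^{(φ)}) is the unique address of z; in particular z is a point of uniqueness. -/

import Mathlib

open Complex

theorem extreme_direction_unique_address (κ : ℂ) (h0 : 0 < ‖κ‖)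
    (h1 : ‖κ‖ < 1) (hnr : κ.im ≠ 0)
    (φ : ℝ) (hφ0 : 0 ≤ φ) (hφ1 : φ < 2 * Real.pi)
    (him : ∀ j : ℕ, (κ ^ j * Complex.exp (φ * Complex.I)).im ≠ 0)
    (aφ : ℕ → ℝ)
    (haφ : ∀ j, aφ j = if 0 < (κ ^ j * Complex.exp (φ * Complex.I)).im then 1 else -1)
    (z : ℂ) (hz : z = ∑' j : ℕ, (aφ j : ℂ) * κ ^ j) :
    (∀ b : ℕ → ℝ, (∀ j, b j = 1 ∨ b j = -1) →
      (((∑' j : ℕ, (b j : ℂ) * κ ^ j) * Complex.exp (φ * Complex.I)).im ≤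
        (z * Complex.exp (φ * Complex.I)).im)) ∧
    (∀ b : ℕ → ℝ, (∀ j, b j = 1 ∨ b j = -1) →
      (∑' j : ℕ, (b j : ℂ) * κ ^ j) ≠ z →
      (((∑' j : ℕ, (b j : ℂ) * κ ^ j) * Complex.exp (φ * Complex.I)).im <
        (z * Complex.exp (φ * Complex.I)).im)) ∧
    (∀ b : ℕ → ℝ, (∀ j, b j = 1 ∨ b j = -1) →
      (∑' j : ℕ, (b j : ℂ) * κ ^ j) = z → b = aφ) := by
  set e := Complex.exp (φ * Complex.I) with he
  have habse : ‖e‖ = 1 := Complex.norm_exp_ofReal_mul_I φ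
  have haφ1 : ∀ j, aφ j = 1 ∨ aφ j = -1 := by
    intro j; rw [haφ j]; split <;> simp
  have hgeo : Summable (fun j : ℕ => ‖κ‖ ^ j) :=
    summable_geometric_of_lt_one (le_of_lt h0) h1
  have hsumC : ∀ b : ℕ → ℝ, (∀ j, b j = 1 ∨ b j = -1) →
      Summable (fun j => (b j : ℂ) * κ ^ j) := by
    intro b hb
    apply Summable.of_norm
    have heq : (fun j => ‖(b j : ℂ) * κ ^ j‖) = fun j => ‖κ‖ ^ j := by
      funext j
      rcases hb j with h | h <;>
        simp [h, norm_mul, norm_pow]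
    rw [heq]; exact hgeo
  have hsumR : ∀ b : ℕ → ℝ, (∀ j, b j = 1 ∨ b j = -1) →
      Summable (fun j => b j * (κ ^ j * e).im) := by
    intro b hb
    apply Summable.of_norm_bounded hgeo
    intro j
    have : ‖b j‖ = 1 := by rcases hb j with h | h <;> simp [h]
    rw [norm_mul, this, one_mul]
    have : |(κ ^ j * e).im| ≤ ‖κ ^ j * e‖ := Complex.abs_im_le_norm _
    calc ‖(κ ^ j * e).im‖ = |(κ ^ j * e).im| := rfl
      _ ≤ ‖κ ^ j * e‖ := this
      _ = ‖κ‖ ^ j := by rw [norm_mul, habse, mul_one, norm_pow]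
  have him' : ∀ b : ℕ → ℝ, (∀ j, b j = 1 ∨ b j = -1) →
      ((∑' j, (b j : ℂ) * κ ^ j) * e).im = ∑' j, b j * (κ ^ j * e).im := by
    intro b hb
    rw [← tsum_mul_right]
    have := Complex.imCLM.map_tsum ((hsumC b hb).mul_right e)
    rw [show ((∑' j, (b j : ℂ) * κ ^ j * e)).im
        = Complex.imCLM (∑' j, (b j : ℂ) * κ ^ j * e) from rfl, this]
    congr 1; funext j
    simp [mul_assoc, Complex.mul_im]
  have hpt : ∀ b : ℕ → ℝ, (∀ j, b j = 1 ∨ b j = -1) → ∀ j, b j * (κ ^ j * e).im ≤ aφ j * (κ ^ j * e).im := by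
    intro b hb j
    have hmj := him j
    have haj : aφ j * (κ ^ j * e).im = |(κ ^ j * e).im| := by
      rcases lt_or_gt_of_ne hmj with h | h
      · rw [haφ j, if_neg (not_lt.mpr h.le), neg_one_mul, abs_of_neg h]
      · rw [haφ j, if_pos h, one_mul, abs_of_pos h]
    rw [haj]
    calc b j * (κ ^ j * e).im ≤ |b j * (κ ^ j * e).im| := le_abs_self _
      _ = |(κ ^ j * e).im| := by
          rw [abs_mul]; rcases hb j with h | h <;> rw [h] <;> simp
  have hptlt : ∀ b : ℕ → ℝ, (∀ j, b j = 1 ∨ b j = -1) → ∀ j, b j ≠ aφ j →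
      b j * (κ ^ j * e).im < aφ j * (κ ^ j * e).im := by
    intro b hb j hne
    have hmj := him j
    have haj : aφ j * (κ ^ j * e).im = |(κ ^ j * e).im| := by
      rcases lt_or_gt_of_ne hmj with h | h
      · rw [haφ j, if_neg (not_lt.mpr h.le), neg_one_mul, abs_of_neg h]
      · rw [haφ j, if_pos h, one_mul, abs_of_pos h]
    have hbj : b j = -aφ j := by
      rcases hb j with h | h <;> rcases haφ1 j with h' | h'
      · exact absurd (h.trans h'.symm) hne
      · simp [h, h']
      · simp [h, h']
      · exact absurd (h.trans h'.symm) hne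
    rw [haj, hbj, neg_mul, haj]
    have : |(κ ^ j * e).im| ≠ 0 := abs_ne_zero.mpr hmj
    have : 0 < |(κ ^ j * e).im| := lt_of_le_of_ne (abs_nonneg _) (Ne.symm this)
    linarith
  have key_lt : ∀ b : ℕ → ℝ, (∀ j, b j = 1 ∨ b j = -1) → b ≠ aφ →
      ((∑' j, (b j : ℂ) * κ ^ j) * e).im < ((∑' j, (aφ j : ℂ) * κ ^ j) * e).im := by
    intro b hb hne
    rw [him' b hb, him' aφ haφ1]
    obtain ⟨j0, hj0⟩ : ∃ j, b j ≠ aφ j := by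
      by_contra h; push_neg at h; exact hne (funext h)
    exact Summable.tsum_lt_tsum (fun j => hpt b hb j) (hptlt b hb j0 hj0)
      (hsumR b hb) (hsumR aφ haφ1)
  refine ⟨?_, ?_, ?_⟩
  · intro b hb
    rw [hz, him' b hb, him' aφ haφ1]
    exact Summable.tsum_le_tsum (hpt b hb) (hsumR b hb) (hsumR aφ haφ1)
  · intro b hb hne
    have hbne : b ≠ aφ := by rintro rfl; exact hne hz.symm
    rw [hz]; exact key_lt b hb hbne
  · intro b hb heq
    by_contra hne
    have := key_lt b hb hne
    rw [heq, hz] at this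
    exact lt_irrefl _ this
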